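/- arXiv:math/0508041 — 2 statements merged into one kernel-verified Lean document; each statement's English description precedes it below -/
import Mathlib

section
/- For any permutation π of [n] and positive integers k, l, the enriched order polynomials satisfy Ω'(π; 2kl) = Σ_{στ = π} Ω'(σ; k)·Ω'(τ; l). -/
open scoped Classical

noncomputable section

/-- The value of `π` at the 1-based position `i`, with the convention
`π(0) = π(n+1) = 0` and values in `{1, …, n}`. -/
def pval {n : ℕ} (π : Equiv.Perm (Fin n)) (i : ℕ) : ℕ :=
  if h : 1 ≤ i ∧ i ≤ n then ((π ⟨i - 1, by omega⟩ : Fin n) : ℕ) + 1 else 0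

/-- The descent set of `π`: positions `1 ≤ s ≤ n-1` with `π(s) > π(s+1)`. -/
def desSet {n : ℕ} (π : Equiv.Perm (Fin n)) : Finset ℕ :=
  (Finset.Ico 1 n).filter fun s => pval π (s + 1) < pval π s

/-- The descent number of `π`. -/
def des {n : ℕ} (π : Equiv.Perm (Fin n)) : ℕ := (desSet π).card

/-- `i` is a peak of `π` (with the convention `π(0) = π(n+1) = 0`). -/
def isPk {n : ℕ} (π : Equiv.Perm (Fin n)) (i : ℕ) : Prop :=
  pval π (i - 1) < pval π i ∧ pval π (i + 1) < pval π i

/-- Interior peak set: peaks `i` with `1 < i < n`. -/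
def intPk {n : ℕ} (π : Equiv.Perm (Fin n)) : Finset ℕ :=
  (Finset.Ioo 1 n).filter (isPk π)

/-- Left peak set: peaks `i` with `1 ≤ i < n`. -/
def leftPk {n : ℕ} (π : Equiv.Perm (Fin n)) : Finset ℕ :=
  (Finset.Ico 1 n).filter (isPk π)

/-- Right peak set: peaks `i` with `1 < i ≤ n`. -/
def rightPk {n : ℕ} (π : Equiv.Perm (Fin n)) : Finset ℕ :=
  (Finset.Ioc 1 n).filter (isPk π)

/-- Exterior peak set: peaks `i` with `1 ≤ i ≤ n`. -/
def extPk {n : ℕ} (π : Equiv.Perm (Fin n)) : Finset ℕ :=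
  (Finset.Icc 1 n).filter (isPk π)

/-- Position of a nonzero integer `a` in the total order `-1 < 1 < -2 < 2 < ⋯`. -/
def ek (a : ℤ) : ℤ := if 0 < a then 2 * a - 1 else -2 * a - 2

/-- `Ω'(π; k)`: the number of enriched `π`-partitions with parts in
`[k]' = {-1 < 1 < -2 < 2 < ⋯ < -k < k}`. -/
def enrichedCount {n : ℕ} (π : Equiv.Perm (Fin n)) (k : ℕ) : ℕ :=
  Nat.card {a : Fin n → ℤ //
    (∀ s, a s ≠ 0 ∧ |a s| ≤ (k : ℤ)) ∧
    ∀ (s : ℕ) (hs : s + 1 < n),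
      if π ⟨s + 1, hs⟩ < π ⟨s, Nat.lt_of_succ_lt hs⟩ then
        ek (a ⟨s, Nat.lt_of_succ_lt hs⟩) < ek (a ⟨s + 1, hs⟩) ∨
          (a ⟨s, Nat.lt_of_succ_lt hs⟩ = a ⟨s + 1, hs⟩ ∧ a ⟨s + 1, hs⟩ < 0)
      else
        ek (a ⟨s, Nat.lt_of_succ_lt hs⟩) < ek (a ⟨s + 1, hs⟩) ∨
          (a ⟨s, Nat.lt_of_succ_lt hs⟩ = a ⟨s + 1, hs⟩ ∧ 0 < a ⟨s + 1, hs⟩)}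

/-- Position of an integer `a` in the total order `0 < -1 < 1 < -2 < 2 < ⋯`. -/
def el (a : ℤ) : ℤ := if 0 < a then 2 * a else if a = 0 then 0 else -2 * a - 1

/-- `Ω^{(ℓ)}(π; k)`: the number of left enriched `π`-partitions with parts in
`[k]^{(ℓ)} = {0 < -1 < 1 < ⋯ < -k < k}`. -/
def leftEnrichedCount {n : ℕ} (π : Equiv.Perm (Fin n)) (k : ℕ) : ℕ :=
  Nat.card {a : Fin n → ℤ //
    (∀ s, |a s| ≤ (k : ℤ)) ∧
    ∀ (s : ℕ) (hs : s + 1 < n),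
      if π ⟨s + 1, hs⟩ < π ⟨s, Nat.lt_of_succ_lt hs⟩ then
        el (a ⟨s, Nat.lt_of_succ_lt hs⟩) < el (a ⟨s + 1, hs⟩) ∨
          (a ⟨s, Nat.lt_of_succ_lt hs⟩ = a ⟨s + 1, hs⟩ ∧ a ⟨s + 1, hs⟩ < 0)
      else
        el (a ⟨s, Nat.lt_of_succ_lt hs⟩) < el (a ⟨s + 1, hs⟩) ∨
          (a ⟨s, Nat.lt_of_succ_lt hs⟩ = a ⟨s + 1, hs⟩ ∧ 0 ≤ a ⟨s + 1, hs⟩)}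

theorem Equiv.Perm.inv_apply_self {α : Type*} (f : Equiv.Perm α) (x : α) : f⁻¹ (f x) = x :=
  f.symm_apply_apply x

theorem Equiv.Perm.apply_inv_self {α : Type*} (f : Equiv.Perm α) (x : α) : f (f⁻¹ x) = x :=
  f.apply_symm_apply x

namespace Aux18
def dec (m : ℕ) : ℤ := if m % 2 = 1 then ((m + 1) / 2 : ℕ) else -(((m / 2) + 1 : ℕ))
lemma dec_ne (m : ℕ) : dec m ≠ 0 := by unfold dec; split_ifs <;> push_cast <;> omega
lemma ek_dec (m : ℕ) : ek (dec m) = m := by unfold dec ek; split_ifs <;> push_cast <;> omega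
lemma dec_ek {z : ℤ} (hz : z ≠ 0) : dec (ek z).toNat = z := by
  unfold dec ek; split_ifs <;> push_cast <;> omega
lemma dec_pos (m : ℕ) : 0 < dec m ↔ m % 2 = 1 := by
  unfold dec; split_ifs <;> push_cast <;> omega
lemma abs_dec_le (m L : ℕ) : |dec m| ≤ (L : ℤ) ↔ m < 2 * L := by
  rw [abs_le]; unfold dec; split_ifs <;> push_cast <;> omega
lemma ek_nonneg {z : ℤ} (hz : z ≠ 0) : 0 ≤ ek z := by unfold ek; split_ifs <;> omega
lemma ekz_cases {z : ℤ} (hz : z ≠ 0) :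
    (0 < z ∧ ek z = 2 * z - 1) ∨ (z < 0 ∧ ek z = -2 * z - 2) := by
  unfold ek; split_ifs with h
  · exact Or.inl ⟨h, rfl⟩
  · exact Or.inr ⟨by omega, rfl⟩
lemma ek_inj {z w : ℤ} (hz : z ≠ 0) (hw : w ≠ 0) (h : ek z = ek w) : z = w := by
  rcases ekz_cases hz with ⟨h1, h2⟩ | ⟨h1, h2⟩ <;> rcases ekz_cases hw with ⟨h3, h4⟩ | ⟨h3, h4⟩ <;>
    omega
lemma ek_toNat_lt {L : ℕ} {z : ℤ} (hz : z ≠ 0) (hb : |z| ≤ (L : ℤ)) :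
    (ek z).toNat < 2 * L := by
  rw [abs_le] at hb; unfold ek; split_ifs <;> omega
lemma parity_ek {z : ℤ} (hz : z ≠ 0) : ((ek z).toNat % 2 = 1) ↔ 0 < z := by
  unfold ek; split_ifs <;> omega

/-! pairing -/

def rem (k : ℕ) (A U : ℤ) : ℕ := if 0 < A then (ek U).toNat else 2 * k - 1 - (ek U).toNat

def enc (k : ℕ) (A U : ℤ) : ℤ := dec (2 * k * (ek A).toNat + rem k A U)

def Adec (k : ℕ) (c : ℤ) : ℤ := dec ((ek c).toNat / (2 * k))

def Udec (k : ℕ) (c : ℤ) : ℤ :=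
  dec (if ((ek c).toNat / (2 * k)) % 2 = 1 then (ek c).toNat % (2 * k)
       else 2 * k - 1 - (ek c).toNat % (2 * k))

variable {k : ℕ} (hk : 0 < k)

lemma rem_lt (hk : 0 < k) {A U : ℤ} (hU : U ≠ 0) (hUb : |U| ≤ (k : ℤ)) :
    rem k A U < 2 * k := by
  have := ek_toNat_lt hU hUb; unfold rem; split_ifs <;> omega

lemma ek_enc (k : ℕ) (A U : ℤ) :
    ek (enc k A U) = ((2 * k * (ek A).toNat + rem k A U : ℕ) : ℤ) := ek_dec _

lemma enc_ne (k : ℕ) (A U : ℤ) : enc k A U ≠ 0 := dec_ne _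

lemma key_div {K q r : ℕ} (hK : 0 < K) (hr : r < K) : (K * q + r) / K = q := by
  rw [Nat.mul_add_div hK, Nat.div_eq_of_lt hr, add_zero]

lemma key_mod {K q r : ℕ} (hr : r < K) : (K * q + r) % K = r := by
  rw [Nat.mul_add_mod, Nat.mod_eq_of_lt hr]

lemma Adec_enc (hk : 0 < k) {A U : ℤ} (hA : A ≠ 0) (hU : U ≠ 0) (hUb : |U| ≤ (k : ℤ)) :
    Adec k (enc k A U) = A := by
  unfold Adec
  rw [ek_enc, Int.toNat_natCast, key_div (by omega) (rem_lt hk hU hUb), dec_ek hA]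

lemma Udec_enc (hk : 0 < k) {A U : ℤ} (hA : A ≠ 0) (hU : U ≠ 0) (hUb : |U| ≤ (k : ℤ)) :
    Udec k (enc k A U) = U := by
  unfold Udec
  rw [ek_enc, Int.toNat_natCast, key_div (by omega) (rem_lt hk hU hUb),
    key_mod (rem_lt hk hU hUb)]
  unfold rem
  by_cases h : 0 < A
  · rw [if_pos h, if_pos ((parity_ek hA).2 h), dec_ek hU]
  · have h2 := ek_toNat_lt hU hUb
    rw [if_neg h, if_neg (by rw [parity_ek hA]; exact h)]
    have h3 : 2 * k - 1 - (2 * k - 1 - (ek U).toNat) = (ek U).toNat := by omega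
    rw [h3, dec_ek hU]

lemma enc_Adec_Udec (hk : 0 < k) {c : ℤ} (hc : c ≠ 0) :
    enc k (Adec k c) (Udec k c) = c := by
  have h2k : 0 < 2 * k := by omega
  set e := (ek c).toNat with he
  have hr : e % (2 * k) < 2 * k := Nat.mod_lt _ h2k
  have hqr : 2 * k * (e / (2 * k)) + e % (2 * k) = e := Nat.div_add_mod e (2 * k)
  unfold enc Adec Udec rem
  rw [← he]
  have hA : (ek (dec (e / (2 * k)))).toNat = e / (2 * k) := by rw [ek_dec, Int.toNat_natCast]
  rw [hA]
  by_cases hq : (e / (2 * k)) % 2 = 1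
  · rw [if_pos hq, if_pos ((dec_pos _).2 hq)]
    have hU : (ek (dec (e % (2 * k)))).toNat = e % (2 * k) := by rw [ek_dec, Int.toNat_natCast]
    rw [hU, hqr, dec_ek hc]
  · rw [if_neg hq, if_neg (by rw [dec_pos]; exact hq)]
    have hU : (ek (dec (2 * k - 1 - e % (2 * k)))).toNat = 2 * k - 1 - e % (2 * k) := by
      rw [ek_dec, Int.toNat_natCast]
    rw [hU]
    have h3 : 2 * k - 1 - (2 * k - 1 - e % (2 * k)) = e % (2 * k) := by omega
    rw [h3, hqr, dec_ek hc]

lemma abs_enc_le (hk : 0 < k) {l : ℕ} (hl : 0 < l) {A U : ℤ} (hA : A ≠ 0)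
    (hAb : |A| ≤ (l : ℤ)) (hU : U ≠ 0) (hUb : |U| ≤ (k : ℤ)) :
    |enc k A U| ≤ ((2 * k * l : ℕ) : ℤ) := by
  unfold enc
  rw [abs_dec_le]
  have h1 : (ek A).toNat < 2 * l := ek_toNat_lt hA hAb
  have h2 : rem k A U < 2 * k := rem_lt hk hU hUb
  have h3 : 2 * k * ((ek A).toNat + 1) ≤ 2 * k * (2 * l) :=
    Nat.mul_le_mul_left _ (by omega)
  have h4 : 2 * k * ((ek A).toNat + 1) = 2 * k * (ek A).toNat + 2 * k := Nat.mul_succ _ _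
  have h5 : 2 * k * (2 * l) = 2 * (2 * k * l) := by ring
  omega

lemma Adec_ne (k : ℕ) (c : ℤ) : Adec k c ≠ 0 := dec_ne _
lemma Udec_ne (k : ℕ) (c : ℤ) : Udec k c ≠ 0 := dec_ne _

lemma abs_Adec_le (hk : 0 < k) {l : ℕ} {c : ℤ} (hc : c ≠ 0)
    (hcb : |c| ≤ ((2 * k * l : ℕ) : ℤ)) : |Adec k c| ≤ (l : ℤ) := by
  unfold Adec
  rw [abs_dec_le]
  have h1 : (ek c).toNat < 2 * (2 * k * l) := ek_toNat_lt hc hcb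
  rw [Nat.div_lt_iff_lt_mul (by omega : 0 < 2 * k)]
  have h5 : 2 * l * (2 * k) = 2 * (2 * k * l) := by ring
  omega

lemma abs_Udec_le (hk : 0 < k) (c : ℤ) : |Udec k c| ≤ (k : ℤ) := by
  unfold Udec
  rw [abs_dec_le]
  have hr : (ek c).toNat % (2 * k) < 2 * k := Nat.mod_lt _ (by omega)
  split_ifs <;> omega

lemma lexlt {K q q' r r' : ℕ} (hr : r < K) (hr' : r' < K) :
    K * q + r < K * q' + r' ↔ (q < q' ∨ (q = q' ∧ r < r')) := by
  rcases lt_trichotomy q q' with hq | hq | hq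
  · have h1 : K * (q + 1) ≤ K * q' := Nat.mul_le_mul_left _ (by omega)
    have h2 : K * (q + 1) = K * q + K := Nat.mul_succ _ _
    omega
  · subst hq; omega
  · have h1 : K * (q' + 1) ≤ K * q := Nat.mul_le_mul_left _ (by omega)
    have h2 : K * (q' + 1) = K * q' + K := Nat.mul_succ _ _
    omega

lemma ek_enc_lt_iff (hk : 0 < k) {A A' U U' : ℤ} (hA : A ≠ 0) (hA' : A' ≠ 0)
    (hU : U ≠ 0) (hU' : U' ≠ 0) (hUb : |U| ≤ (k : ℤ)) (hU'b : |U'| ≤ (k : ℤ)) :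
    ek (enc k A U) < ek (enc k A' U') ↔
      (ek A < ek A' ∨ (A = A' ∧ ((0 < A ∧ ek U < ek U') ∨ (A < 0 ∧ ek U' < ek U)))) := by
  rw [ek_enc, ek_enc, Nat.cast_lt, lexlt (rem_lt hk hU hUb) (rem_lt hk hU' hU'b)]
  have hq : (ek A).toNat < (ek A').toNat ↔ ek A < ek A' := by
    have := ek_nonneg hA; have := ek_nonneg hA'; omega
  have hqe : (ek A).toNat = (ek A').toNat ↔ A = A' := by
    constructor
    · intro h
      exact ek_inj hA hA' (by have := ek_nonneg hA; have := ek_nonneg hA'; omega)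
    · rintro rfl; rfl
  rw [hq, hqe]
  constructor
  · rintro (h | ⟨rfl, h⟩)
    · exact Or.inl h
    · refine Or.inr ⟨rfl, ?_⟩
      unfold rem at h
      have hu := ek_toNat_lt hU hUb
      have hu' := ek_toNat_lt hU' hU'b
      have h6 := ek_nonneg hU; have h7 := ek_nonneg hU'
      rcases ekz_cases hA with ⟨hs, _⟩ | ⟨hs, _⟩
      · rw [if_pos hs, if_pos hs] at h; exact Or.inl ⟨hs, by omega⟩
      · rw [if_neg (by omega), if_neg (by omega)] at h; exact Or.inr ⟨hs, by omega⟩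
  · rintro (h | ⟨rfl, h⟩)
    · exact Or.inl h
    · refine Or.inr ⟨rfl, ?_⟩
      unfold rem
      have hu := ek_toNat_lt hU hUb
      have hu' := ek_toNat_lt hU' hU'b
      have h6 := ek_nonneg hU; have h7 := ek_nonneg hU'
      rcases h with ⟨hs, h⟩ | ⟨hs, h⟩
      · rw [if_pos hs, if_pos hs]; omega
      · rw [if_neg (by omega), if_neg (by omega)]; omega

lemma enc_inj (hk : 0 < k) {A A' U U' : ℤ} (hA : A ≠ 0) (hA' : A' ≠ 0)
    (hU : U ≠ 0) (hU' : U' ≠ 0) (hUb : |U| ≤ (k : ℤ)) (hU'b : |U'| ≤ (k : ℤ)) :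
    enc k A U = enc k A' U' ↔ (A = A' ∧ U = U') := by
  constructor
  · intro h
    constructor
    · have := congrArg (Adec k) h
      rwa [Adec_enc hk hA hU hUb, Adec_enc hk hA' hU' hU'b] at this
    · have := congrArg (Udec k) h
      rwa [Udec_enc hk hA hU hUb, Udec_enc hk hA' hU' hU'b] at this
  · rintro ⟨rfl, rfl⟩; rfl

lemma enc_pos_iff (hk : 0 < k) {A U : ℤ} (hA : A ≠ 0) (hU : U ≠ 0) (hUb : |U| ≤ (k : ℤ)) :
    0 < enc k A U ↔ ((0 < A ∧ 0 < U) ∨ (A < 0 ∧ U < 0)) := by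
  unfold enc
  rw [dec_pos]
  have h2 : 2 * k * (ek A).toNat = 2 * (k * (ek A).toNat) := by ring
  have hpA := parity_ek hA
  have hpU := parity_ek hU
  have hu := ek_toNat_lt hU hUb
  unfold rem
  split_ifs with h
  · omega
  · have hA' : A < 0 := by omega
    omega

/-! the key local equivalence -/

set_option maxHeartbeats 2000000 in
lemma local_core {A A' U U' E E' eA eA' eU eU' eE eE' : ℤ}
    (hA : A ≠ 0) (hA' : A' ≠ 0) (hU : U ≠ 0) (hU' : U' ≠ 0)
    (he1 : eE < eE' ↔ (eA < eA' ∨ (A = A' ∧ ((0 < A ∧ eU < eU') ∨ (A < 0 ∧ eU' < eU)))))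
    (he2 : E = E' ↔ (A = A' ∧ U = U'))
    (he3 : 0 < E' ↔ ((0 < A' ∧ 0 < U') ∨ (A' < 0 ∧ U' < 0)))
    (he4 : E' ≠ 0)
    (fA : (0 < A ∧ eA = 2 * A - 1) ∨ (A < 0 ∧ eA = -2 * A - 2))
    (fA' : (0 < A' ∧ eA' = 2 * A' - 1) ∨ (A' < 0 ∧ eA' = -2 * A' - 2))
    (fU : (0 < U ∧ eU = 2 * U - 1) ∨ (U < 0 ∧ eU = -2 * U - 2))
    (fU' : (0 < U' ∧ eU' = 2 * U' - 1) ∨ (U' < 0 ∧ eU' = -2 * U' - 2))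
    (d dτ : Prop) [Decidable d] [Decidable dτ]
    (hd : dτ ↔ (eU' < eU ∨ (U' = U ∧ ((0 < U' ∧ d) ∨ (U' < 0 ∧ ¬d))))) :
    (if d then eE < eE' ∨ (E = E' ∧ E' < 0) else eE < eE' ∨ (E = E' ∧ 0 < E')) ↔
    (if dτ then eA < eA' ∨ (A = A' ∧ A' < 0) else eA < eA' ∨ (A = A' ∧ 0 < A')) := by
  by_cases h1 : d <;> by_cases h2 : dτ
  · rw [if_pos h1, if_pos h2]
    have harith : eU' < eU ∨ (U' = U ∧ 0 < U') := by
      rcases hd.mp h2 with h | ⟨h3, h4 | h4⟩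
      · exact Or.inl h
      · exact Or.inr ⟨h3, h4.1⟩
      · exact absurd h1 h4.2
    clear! d dτ
    omega
  · rw [if_pos h1, if_neg h2]
    have harith : ¬(eU' < eU ∨ (U' = U ∧ 0 < U')) := by
      rintro (h | ⟨h3, h4⟩)
      · exact h2 (hd.mpr (Or.inl h))
      · exact h2 (hd.mpr (Or.inr ⟨h3, Or.inl ⟨h4, h1⟩⟩))
    clear! d dτ
    omega
  · rw [if_neg h1, if_pos h2]
    have harith : eU' < eU ∨ (U' = U ∧ U' < 0) := by
      rcases hd.mp h2 with h | ⟨h3, h4 | h4⟩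
      · exact Or.inl h
      · exact absurd h4.2 h1
      · exact Or.inr ⟨h3, h4.1⟩
    clear! d dτ
    omega
  · rw [if_neg h1, if_neg h2]
    have harith : ¬(eU' < eU ∨ (U' = U ∧ U' < 0)) := by
      rintro (h | ⟨h3, h4⟩)
      · exact h2 (hd.mpr (Or.inl h))
      · exact h2 (hd.mpr (Or.inr ⟨h3, Or.inr ⟨h4, h1⟩⟩))
    clear! d dτ
    omega

lemma local_iff (hk : 0 < k) {A A' U U' : ℤ} (hA : A ≠ 0) (hA' : A' ≠ 0) (hU : U ≠ 0)
    (hU' : U' ≠ 0) (hUb : |U| ≤ (k : ℤ)) (hU'b : |U'| ≤ (k : ℤ)) (d dτ : Prop)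
    [Decidable d] [Decidable dτ]
    (hd : dτ ↔ (ek U' < ek U ∨ (U' = U ∧ ((0 < U' ∧ d) ∨ (U' < 0 ∧ ¬d))))) :
    (if d then
        ek (enc k A U) < ek (enc k A' U') ∨ (enc k A U = enc k A' U' ∧ enc k A' U' < 0)
      else
        ek (enc k A U) < ek (enc k A' U') ∨ (enc k A U = enc k A' U' ∧ 0 < enc k A' U')) ↔
    (if dτ then ek A < ek A' ∨ (A = A' ∧ A' < 0)
      else ek A < ek A' ∨ (A = A' ∧ 0 < A')) := by
  exact local_core hA hA' hU hU' (ek_enc_lt_iff hk hA hA' hU hU' hUb hU'b)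
    (enc_inj hk hA hA' hU hU' hUb hU'b) (enc_pos_iff hk hA' hU' hU'b) (enc_ne k A' U')
    (ekz_cases hA) (ekz_cases hA') (ekz_cases hU) (ekz_cases hU') d dτ hd

/-! rank machinery -/

variable {n : ℕ}

def flt (f : Fin n → ℤ) (x y : Fin n) : Prop :=
  ek (f x) < ek (f y) ∨ (f x = f y ∧ ((0 < f x ∧ x < y) ∨ (f x < 0 ∧ y < x)))

lemma flt_irrefl (f : Fin n → ℤ) (x : Fin n) : ¬ flt f x x := by
  rintro (h | ⟨_, ⟨_, h⟩ | ⟨_, h⟩⟩) <;> exact absurd h (lt_irrefl _)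

lemma flt_trans (f : Fin n → ℤ) (hf : ∀ x, f x ≠ 0) {x y z : Fin n} :
    flt f x y → flt f y z → flt f x z := by
  intro h1 h2
  rcases h1 with h1 | ⟨e1, s1⟩ <;> rcases h2 with h2 | ⟨e2, s2⟩
  · exact Or.inl (lt_trans h1 h2)
  · left; rwa [e2] at h1
  · left; rwa [← e1] at h2
  · right
    refine ⟨e1.trans e2, ?_⟩
    rw [← e1] at s2
    rcases s1 with ⟨p1, l1⟩ | ⟨p1, l1⟩ <;> rcases s2 with ⟨p2, l2⟩ | ⟨p2, l2⟩
    · exact Or.inl ⟨p1, lt_trans l1 l2⟩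
    · omega
    · omega
    · exact Or.inr ⟨p1, lt_trans l2 l1⟩

lemma flt_total (f : Fin n → ℤ) (hf : ∀ x, f x ≠ 0) {x y : Fin n} (hxy : x ≠ y) :
    flt f x y ∨ flt f y x := by
  rcases lt_trichotomy (ek (f x)) (ek (f y)) with h | h | h
  · exact Or.inl (Or.inl h)
  case inr.inr => exact Or.inr (Or.inl h)
  · have e := ek_inj (hf x) (hf y) h
    rcases hxy.lt_or_gt with hl | hl
    · rcases lt_or_gt_of_ne (hf x) with hs | hs
      · exact Or.inr (Or.inr ⟨e.symm, Or.inr ⟨by rw [← e]; exact hs, hl⟩⟩)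
      · exact Or.inl (Or.inr ⟨e, Or.inl ⟨hs, hl⟩⟩)
    · rcases lt_or_gt_of_ne (hf x) with hs | hs
      · exact Or.inl (Or.inr ⟨e, Or.inr ⟨hs, hl⟩⟩)
      · exact Or.inr (Or.inr ⟨e.symm, Or.inl ⟨by rw [← e]; exact hs, hl⟩⟩)

open Finset in
def rk (f : Fin n → ℤ) (x : Fin n) : ℕ := (univ.filter (fun z => flt f z x)).card

open Finset in
lemma rk_lt (f : Fin n → ℤ) (x : Fin n) : rk f x < n := by
  have h : univ.filter (fun z => flt f z x) ⊆ univ.erase x := by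
    intro z hz
    rw [mem_filter] at hz
    rw [mem_erase]
    refine ⟨?_, mem_univ _⟩
    rintro rfl
    exact flt_irrefl f _ hz.2
  have h2 := card_le_card h
  rw [card_erase_of_mem (mem_univ x), card_univ, Fintype.card_fin] at h2
  have := x.pos
  unfold rk
  omega

open Finset in
lemma rk_lt_rk (f : Fin n → ℤ) (hf : ∀ x, f x ≠ 0) {x y : Fin n} (h : flt f x y) :
    rk f x < rk f y := by
  apply card_lt_card
  constructor
  · intro z hz
    rw [mem_filter] at *
    exact ⟨mem_univ _, flt_trans f hf hz.2 h⟩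
  · intro hcon
    have hx : x ∈ univ.filter (fun z => flt f z y) := by
      rw [mem_filter]; exact ⟨mem_univ _, h⟩
    have := hcon hx
    rw [mem_filter] at this
    exact flt_irrefl f x this.2

def rkF (f : Fin n → ℤ) (x : Fin n) : Fin n := ⟨rk f x, rk_lt f x⟩

lemma rkF_inj (f : Fin n → ℤ) (hf : ∀ x, f x ≠ 0) : Function.Injective (rkF f) := by
  intro x y h
  by_contra hxy
  rcases flt_total f hf hxy with h' | h' <;> have h2 := rk_lt_rk f hf h' <;>
    rw [Fin.ext_iff] at h <;> simp only [rkF] at h <;> omega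

noncomputable def rperm (f : Fin n → ℤ) : Equiv.Perm (Fin n) :=
  if h : Function.Bijective (rkF f) then Equiv.ofBijective _ h else 1

lemma rperm_apply (f : Fin n → ℤ) (hf : ∀ x, f x ≠ 0) (x : Fin n) :
    rperm f x = rkF f x := by
  have hb : Function.Bijective (rkF f) := Finite.injective_iff_bijective.1 (rkF_inj f hf)
  rw [rperm, dif_pos hb]
  rfl

lemma rperm_lt_iff (f : Fin n → ℤ) (hf : ∀ x, f x ≠ 0) {x y : Fin n} :
    rperm f x < rperm f y ↔ flt f x y := by
  rw [rperm_apply f hf, rperm_apply f hf]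
  constructor
  · intro h
    by_contra hn
    have hxy : x ≠ y := by rintro rfl; exact lt_irrefl _ h
    rcases flt_total f hf hxy with h' | h'
    · exact hn h'
    · have h2 := rk_lt_rk f hf h'
      rw [Fin.lt_def] at h
      simp only [rkF] at h
      omega
  · intro h
    have h2 := rk_lt_rk f hf h
    rw [Fin.lt_def]
    simpa only [rkF] using h2

open Finset in
lemma card_filter_lt_fin (t : Fin n) : (univ.filter (fun w : Fin n => w < t)).card = (t : ℕ) := by
  have h : univ.filter (fun w : Fin n => w < t) = Finset.Iio t := by
    ext w; simp [Finset.mem_Iio]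
  rw [h, Fin.card_Iio]

open Finset in
lemma rperm_eq_of_sorted (f : Fin n → ℤ) (hf : ∀ x, f x ≠ 0) (g : Equiv.Perm (Fin n))
    (hg : ∀ z w, flt f z w ↔ g z < g w) : rperm f = g := by
  apply Equiv.ext
  intro x
  rw [rperm_apply f hf]
  apply Fin.ext
  show rk f x = (g x : ℕ)
  unfold rk
  have himg : univ.filter (fun z => flt f z x) =
      (univ.filter (fun w : Fin n => w < g x)).image g.symm := by
    ext z
    simp only [mem_filter, mem_univ, true_and, mem_image]
    constructor
    · intro h
      exact ⟨g z, (hg z x).1 h, g.symm_apply_apply z⟩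
    · rintro ⟨w, hw, rfl⟩
      rw [hg]
      rwa [g.apply_symm_apply]
  rw [himg, card_image_of_injective _ g.symm.injective, card_filter_lt_fin]

/-! main construction -/

section Main

open Equiv Finset

variable {n : ℕ}

def OKb (ρ : Equiv.Perm (Fin n)) (m : ℕ) (a : Fin n → ℤ) : Prop :=
  (∀ s, a s ≠ 0 ∧ |a s| ≤ (m : ℤ)) ∧
  ∀ (s : ℕ) (hs : s + 1 < n),
    if ρ ⟨s + 1, hs⟩ < ρ ⟨s, Nat.lt_of_succ_lt hs⟩ then
      ek (a ⟨s, Nat.lt_of_succ_lt hs⟩) < ek (a ⟨s + 1, hs⟩) ∨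
        (a ⟨s, Nat.lt_of_succ_lt hs⟩ = a ⟨s + 1, hs⟩ ∧ a ⟨s + 1, hs⟩ < 0)
    else
      ek (a ⟨s, Nat.lt_of_succ_lt hs⟩) < ek (a ⟨s + 1, hs⟩) ∨
        (a ⟨s, Nat.lt_of_succ_lt hs⟩ = a ⟨s + 1, hs⟩ ∧ 0 < a ⟨s + 1, hs⟩)

variable (k l : ℕ) (π : Equiv.Perm (Fin n))

def ff (c : Fin n → ℤ) : Fin n → ℤ := fun y => Udec k (c (π⁻¹ y))

noncomputable def sigmaOf (c : Fin n → ℤ) : Equiv.Perm (Fin n) := (rperm (ff k π c))⁻¹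

noncomputable def tauOf (c : Fin n → ℤ) : Equiv.Perm (Fin n) := rperm (ff k π c) * π

noncomputable def bOf (c : Fin n → ℤ) : Fin n → ℤ :=
  fun t => ff k π c ((rperm (ff k π c))⁻¹ t)

def AOf (c : Fin n → ℤ) : Fin n → ℤ := fun s => Adec k (c s)

lemma sigma_mul_tau (c : Fin n → ℤ) : sigmaOf k π c * tauOf k π c = π := by
  unfold sigmaOf tauOf
  group

lemma lt_iff_not_lt' {x y : Fin n} (h : y ≠ x) : x < y ↔ ¬ y < x :=
  ⟨fun h1 h2 => absurd h1 (asymm h2), fun h2 => (h.lt_or_gt).resolve_left h2⟩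

lemma pi_ne (s : ℕ) (hs : s + 1 < n) :
    π ⟨s + 1, hs⟩ ≠ π ⟨s, Nat.lt_of_succ_lt hs⟩ := fun hcon => by
  have := π.injective hcon
  simp only [Fin.mk.injEq] at this
  omega

lemma fwd_sigma (hk : 0 < k) (c : Fin n → ℤ) : OKb (sigmaOf k π c) k (bOf k π c) := by
  have hf : ∀ x, ff k π c x ≠ 0 := fun x => Udec_ne _ _
  refine ⟨fun s => ⟨Udec_ne _ _, abs_Udec_le hk _⟩, ?_⟩
  intro s hs
  have hflt : flt (ff k π c) (sigmaOf k π c ⟨s, Nat.lt_of_succ_lt hs⟩)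
      (sigmaOf k π c ⟨s + 1, hs⟩) := by
    rw [← rperm_lt_iff (ff k π c) hf]
    show rperm (ff k π c) ((rperm (ff k π c))⁻¹ _) < rperm (ff k π c) ((rperm (ff k π c))⁻¹ _)
    rw [Equiv.Perm.apply_inv_self, Equiv.Perm.apply_inv_self]
    rw [Fin.mk_lt_mk]
    omega
  have hb : ∀ t, bOf k π c t = ff k π c (sigmaOf k π c t) := fun _ => rfl
  rcases hflt with h | ⟨he, hsgn⟩
  · rw [hb, hb]
    split_ifs <;> exact Or.inl h
  · rcases hsgn with ⟨hpos, hlt2⟩ | ⟨hneg, hlt2⟩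
    · rw [if_neg (fun hcon => absurd hlt2 (asymm hcon)), hb, hb]
      exact Or.inr ⟨he, by rw [← he]; exact hpos⟩
    · rw [if_pos hlt2, hb, hb]
      exact Or.inr ⟨he, by rw [← he]; exact hneg⟩

lemma fwd_tau (hk : 0 < k) {l : ℕ} (c : Fin n → ℤ) (hc : OKb π (2 * k * l) c) :
    OKb (tauOf k π c) l (AOf k c) := by
  have hf : ∀ x, ff k π c x ≠ 0 := fun x => Udec_ne _ _
  refine ⟨fun s => ⟨Adec_ne _ _, abs_Adec_le hk (hc.1 s).1 (hc.1 s).2⟩, ?_⟩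
  intro s hs
  have hcc := hc.2 s hs
  have hrepr : ∀ t : Fin n, c t = enc k (AOf k c t) (Udec k (c t)) :=
    fun t => (enc_Adec_Udec hk (hc.1 t).1).symm
  rw [hrepr ⟨s, Nat.lt_of_succ_lt hs⟩, hrepr ⟨s + 1, hs⟩] at hcc
  have hUx : ∀ t : Fin n, Udec k (c t) = ff k π c (π t) := by
    intro t
    show _ = Udec k (c (π⁻¹ (π t)))
    rw [Equiv.Perm.inv_apply_self]
  have hd : (tauOf k π c ⟨s + 1, hs⟩ < tauOf k π c ⟨s, Nat.lt_of_succ_lt hs⟩) ↔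
      (ek (Udec k (c ⟨s + 1, hs⟩)) < ek (Udec k (c ⟨s, Nat.lt_of_succ_lt hs⟩)) ∨
       (Udec k (c ⟨s + 1, hs⟩) = Udec k (c ⟨s, Nat.lt_of_succ_lt hs⟩) ∧
        ((0 < Udec k (c ⟨s + 1, hs⟩) ∧
            π ⟨s + 1, hs⟩ < π ⟨s, Nat.lt_of_succ_lt hs⟩) ∨
         (Udec k (c ⟨s + 1, hs⟩) < 0 ∧
            ¬ π ⟨s + 1, hs⟩ < π ⟨s, Nat.lt_of_succ_lt hs⟩)))) := by
    show (rperm (ff k π c) (π ⟨s + 1, hs⟩) < rperm (ff k π c) (π ⟨s, Nat.lt_of_succ_lt hs⟩)) ↔ _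
    rw [rperm_lt_iff (ff k π c) hf]
    unfold flt
    rw [← hUx, ← hUx,
      lt_iff_not_lt' (pi_ne π s hs)]
  exact (local_iff hk (Adec_ne _ _) (Adec_ne _ _) (Udec_ne _ _) (Udec_ne _ _)
    (abs_Udec_le hk _) (abs_Udec_le hk _) _ _ hd).mp hcc

lemma sorted_flt {m : ℕ} (σ : Equiv.Perm (Fin n)) (b : Fin n → ℤ) (hb : OKb σ m b) :
    ∀ z w : Fin n, flt (fun y => b (σ⁻¹ y)) z w ↔ σ⁻¹ z < σ⁻¹ w := by
  set f : Fin n → ℤ := fun y => b (σ⁻¹ y) with hfdef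
  have hf : ∀ x, f x ≠ 0 := fun x => (hb.1 _).1
  have hfs : ∀ u : Fin n, f (σ u) = b u := by
    intro u; show b (σ⁻¹ (σ u)) = b u; rw [Equiv.Perm.inv_apply_self]
  have step1 : ∀ (t : ℕ) (ht : t + 1 < n),
      flt f (σ ⟨t, Nat.lt_of_succ_lt ht⟩) (σ ⟨t + 1, ht⟩) := by
    intro t ht
    have hcc := hb.2 t ht
    by_cases hd : σ ⟨t + 1, ht⟩ < σ ⟨t, Nat.lt_of_succ_lt ht⟩
    · rw [if_pos hd] at hcc
      rcases hcc with h | ⟨he, hneg⟩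
      · exact Or.inl (by rw [hfs, hfs]; exact h)
      · refine Or.inr ⟨by rw [hfs, hfs]; exact he, Or.inr ⟨?_, hd⟩⟩
        rw [hfs, he]; exact hneg
    · rw [if_neg hd] at hcc
      have hlt : σ ⟨t, Nat.lt_of_succ_lt ht⟩ < σ ⟨t + 1, ht⟩ :=
        ((pi_ne σ t ht).lt_or_gt).resolve_left hd
      rcases hcc with h | ⟨he, hpos⟩
      · exact Or.inl (by rw [hfs, hfs]; exact h)
      · refine Or.inr ⟨by rw [hfs, hfs]; exact he, Or.inl ⟨?_, hlt⟩⟩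
        rw [hfs, he]; exact hpos
  have step2 : ∀ (m : ℕ) (i j : Fin n), (j : ℕ) = (i : ℕ) + m + 1 → flt f (σ i) (σ j) := by
    intro m
    induction m with
    | zero =>
      intro i j hj
      have h1 : (i : ℕ) + 1 < n := by have := j.isLt; omega
      have e1 : (⟨(i : ℕ), Nat.lt_of_succ_lt h1⟩ : Fin n) = i := Fin.ext rfl
      have e2 : (⟨(i : ℕ) + 1, h1⟩ : Fin n) = j := Fin.ext (by show (i : ℕ) + 1 = (j : ℕ); omega)
      rw [← e1, ← e2]
      exact step1 (i : ℕ) h1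
    | succ m ih =>
      intro i j hj
      have hjn := j.isLt
      have h2 : ((i : ℕ) + m + 1) + 1 < n := by omega
      refine flt_trans f hf (ih i ⟨(i : ℕ) + m + 1, Nat.lt_of_succ_lt h2⟩ rfl) ?_
      have e2 : (⟨(i : ℕ) + m + 1 + 1, h2⟩ : Fin n) = j :=
        Fin.ext (by show (i : ℕ) + m + 1 + 1 = (j : ℕ); omega)
      rw [← e2]
      exact step1 ((i : ℕ) + m + 1) h2
  have dir : ∀ z w : Fin n, σ⁻¹ z < σ⁻¹ w → flt f z w := by
    intro z w h
    have hval : ((σ⁻¹ w : Fin n) : ℕ) = ((σ⁻¹ z : Fin n) : ℕ) +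
        (((σ⁻¹ w : Fin n) : ℕ) - ((σ⁻¹ z : Fin n) : ℕ) - 1) + 1 := by
      rw [Fin.lt_def] at h; omega
    have := step2 _ (σ⁻¹ z) (σ⁻¹ w) hval
    rwa [Equiv.Perm.apply_inv_self, Equiv.Perm.apply_inv_self] at this
  intro z w
  constructor
  · intro h
    by_contra hnot
    rcases eq_or_ne z w with rfl | hne
    · exact flt_irrefl f z h
    · have hne2 : σ⁻¹ z ≠ σ⁻¹ w := fun hcon => hne (by
        have := congrArg σ hcon
        rwa [Equiv.Perm.apply_inv_self, Equiv.Perm.apply_inv_self] at this)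
      have h2 : σ⁻¹ w < σ⁻¹ z := (hne2.lt_or_gt).resolve_left hnot
      exact flt_irrefl f z (flt_trans f hf h (dir w z h2))
  · exact dir z w

lemma sorted_rperm {m : ℕ} (σ : Equiv.Perm (Fin n)) (b : Fin n → ℤ) (hb : OKb σ m b) :
    rperm (fun y => b (σ⁻¹ y)) = σ⁻¹ :=
  rperm_eq_of_sorted _ (fun x => (hb.1 _).1) σ⁻¹ (by
    intro z w
    exact sorted_flt σ b hb z w)

lemma bwd (hk : 0 < k) (hl : 0 < l) (σ τ : Equiv.Perm (Fin n)) (hστ : σ * τ = π)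
    (b A : Fin n → ℤ) (hb : OKb σ k b) (hA : OKb τ l A) :
    OKb π (2 * k * l) (fun s => enc k (A s) (b (τ s))) := by
  have hτπ : ∀ t : Fin n, τ t = σ⁻¹ (π t) := by
    intro t
    rw [← hστ]
    show τ t = σ⁻¹ (σ (τ t))
    rw [Equiv.Perm.inv_apply_self]
  refine ⟨fun s => ⟨enc_ne _ _ _,
    abs_enc_le hk hl (hA.1 s).1 (hA.1 s).2 (hb.1 _).1 (hb.1 _).2⟩, ?_⟩
  intro s hs
  have hAcc := hA.2 s hs
  have hd : (τ ⟨s + 1, hs⟩ < τ ⟨s, Nat.lt_of_succ_lt hs⟩) ↔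
      (ek (b (τ ⟨s + 1, hs⟩)) < ek (b (τ ⟨s, Nat.lt_of_succ_lt hs⟩)) ∨
       (b (τ ⟨s + 1, hs⟩) = b (τ ⟨s, Nat.lt_of_succ_lt hs⟩) ∧
        ((0 < b (τ ⟨s + 1, hs⟩) ∧ π ⟨s + 1, hs⟩ < π ⟨s, Nat.lt_of_succ_lt hs⟩) ∨
         (b (τ ⟨s + 1, hs⟩) < 0 ∧ ¬ π ⟨s + 1, hs⟩ < π ⟨s, Nat.lt_of_succ_lt hs⟩)))) := by
    rw [hτπ ⟨s, Nat.lt_of_succ_lt hs⟩, hτπ ⟨s + 1, hs⟩]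
    rw [← sorted_flt σ b hb (π ⟨s + 1, hs⟩) (π ⟨s, Nat.lt_of_succ_lt hs⟩)]
    unfold flt
    rw [lt_iff_not_lt' (pi_ne π s hs)]
  exact (local_iff hk (hA.1 _).1 (hA.1 _).1 (hb.1 _).1 (hb.1 _).1
    (hb.1 _).2 (hb.1 _).2 _ _ hd).mpr hAcc

lemma rt1 (hk : 0 < k) {l : ℕ} (c : Fin n → ℤ) (hc : OKb π (2 * k * l) c) :
    (fun s => enc k (AOf k c s) (bOf k π c (tauOf k π c s))) = c := by
  funext s
  have h1 : bOf k π c (tauOf k π c s) = Udec k (c s) := by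
    show ff k π c ((rperm (ff k π c))⁻¹ (rperm (ff k π c) (π s))) = _
    rw [Equiv.Perm.inv_apply_self]
    show Udec k (c (π⁻¹ (π s))) = _
    rw [Equiv.Perm.inv_apply_self]
  rw [h1]
  exact enc_Adec_Udec hk (hc.1 s).1

variable {k l : ℕ} {π : Equiv.Perm (Fin n)}

lemma rt2_ff (hk : 0 < k) (σ τ : Equiv.Perm (Fin n)) (hστ : σ * τ = π) (b A : Fin n → ℤ)
    (hb : OKb σ k b) (hA : OKb τ l A) :
    ff k π (fun s => enc k (A s) (b (τ s))) = fun y => b (σ⁻¹ y) := by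
  funext y
  show Udec k (enc k (A (π⁻¹ y)) (b (τ (π⁻¹ y)))) = b (σ⁻¹ y)
  rw [Udec_enc hk (hA.1 _).1 (hb.1 _).1 (hb.1 _).2]
  congr 1
  have h2 : σ (τ (π⁻¹ y)) = y := by
    rw [show σ (τ (π⁻¹ y)) = (σ * τ) (π⁻¹ y) from rfl, hστ, Equiv.Perm.apply_inv_self]
  calc τ (π⁻¹ y) = σ⁻¹ (σ (τ (π⁻¹ y))) := (Equiv.Perm.inv_apply_self σ _).symm
  _ = σ⁻¹ y := by rw [h2]

lemma rt2_sigma (hk : 0 < k) (σ τ : Equiv.Perm (Fin n)) (hστ : σ * τ = π) (b A : Fin n → ℤ)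
    (hb : OKb σ k b) (hA : OKb τ l A) :
    sigmaOf k π (fun s => enc k (A s) (b (τ s))) = σ := by
  unfold sigmaOf
  rw [rt2_ff hk σ τ hστ b A hb hA, sorted_rperm σ b hb, inv_inv]

lemma rt2_tau (hk : 0 < k) (σ τ : Equiv.Perm (Fin n)) (hστ : σ * τ = π) (b A : Fin n → ℤ)
    (hb : OKb σ k b) (hA : OKb τ l A) :
    tauOf k π (fun s => enc k (A s) (b (τ s))) = τ := by
  unfold tauOf
  rw [rt2_ff hk σ τ hστ b A hb hA, sorted_rperm σ b hb, ← hστ]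
  group

lemma rt2_b (hk : 0 < k) (σ τ : Equiv.Perm (Fin n)) (hστ : σ * τ = π) (b A : Fin n → ℤ)
    (hb : OKb σ k b) (hA : OKb τ l A) :
    bOf k π (fun s => enc k (A s) (b (τ s))) = b := by
  funext t
  show ff k π _ ((rperm (ff k π (fun s => enc k (A s) (b (τ s)))))⁻¹ t) = b t
  rw [rt2_ff hk σ τ hστ b A hb hA, sorted_rperm σ b hb, inv_inv]
  show b (σ⁻¹ (σ t)) = b t
  rw [Equiv.Perm.inv_apply_self]

lemma rt2_A (hk : 0 < k) (σ τ : Equiv.Perm (Fin n)) (hστ : σ * τ = π) (b A : Fin n → ℤ)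
    (hb : OKb σ k b) (hA : OKb τ l A) :
    AOf k (fun s => enc k (A s) (b (τ s))) = A := by
  funext s
  exact Adec_enc hk (hA.1 _).1 (hb.1 _).1 (hb.1 _).2

lemma okb_finite (ρ : Equiv.Perm (Fin n)) (m : ℕ) : Finite {a : Fin n → ℤ // OKb ρ m a} := by
  haveI : Finite (Set.Icc (-(m : ℤ)) (m : ℤ)) := (Set.finite_Icc _ _).to_subtype
  let g : {a : Fin n → ℤ // OKb ρ m a} → (Fin n → Set.Icc (-(m : ℤ)) (m : ℤ)) := fun a s =>
    ⟨a.1 s, by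
      rcases abs_le.1 (a.2.1 s).2 with ⟨h1, h2⟩
      exact Set.mem_Icc.2 ⟨h1, h2⟩⟩
  have hg : Function.Injective g := by
    intro a b h
    apply Subtype.ext
    funext s
    exact congrArg Subtype.val (congrFun h s)
  exact Finite.of_injective g hg

end Main
end Aux18

section Final

open Aux18 Equiv Finset

variable {n : ℕ}

def Fib (k l : ℕ) (π : Equiv.Perm (Fin n))
    (p : Equiv.Perm (Fin n) × Equiv.Perm (Fin n)) : Type :=
  {ab : (Fin n → ℤ) × (Fin n → ℤ) //
    p.1 * p.2 = π ∧ OKb p.1 k ab.1 ∧ OKb p.2 l ab.2}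

lemma fib_finite (k l : ℕ) (π : Equiv.Perm (Fin n))
    (p : Equiv.Perm (Fin n) × Equiv.Perm (Fin n)) : Finite (Fib k l π p) := by
  haveI := okb_finite p.1 k
  haveI := okb_finite p.2 l
  let g : Fib k l π p → ({a : Fin n → ℤ // OKb p.1 k a} × {a : Fin n → ℤ // OKb p.2 l a}) :=
    fun x => (⟨x.1.1, x.2.2.1⟩, ⟨x.1.2, x.2.2.2⟩)
  have hg : Function.Injective g := by
    intro x y h
    apply Subtype.ext
    have h1 : x.1.1 = y.1.1 := congrArg (fun z => (z.1 : Fin n → ℤ)) h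
    have h2 : x.1.2 = y.1.2 := congrArg (fun z => (z.2 : Fin n → ℤ)) h
    exact Prod.ext h1 h2
  exact Finite.of_injective g hg

noncomputable def mainEquiv (k l : ℕ) (hk : 0 < k) (hl : 0 < l) (π : Equiv.Perm (Fin n)) :
    {a : Fin n → ℤ // OKb π (2 * k * l) a} ≃ (Σ p, Fib k l π p) where
  toFun c := ⟨(sigmaOf k π c.1, tauOf k π c.1),
    ⟨(bOf k π c.1, AOf k c.1),
      sigma_mul_tau k π c.1, fwd_sigma k π hk c.1, fwd_tau k π hk c.1 c.2⟩⟩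
  invFun q := ⟨fun s => enc k (q.2.1.2 s) (q.2.1.1 (q.1.2 s)),
    bwd k l π hk hl q.1.1 q.1.2 q.2.2.1 q.2.1.1 q.2.1.2 q.2.2.2.1 q.2.2.2.2⟩
  left_inv c := Subtype.ext (rt1 k π hk c.1 c.2)
  right_inv q := by
    obtain ⟨⟨σ, τ⟩, ⟨⟨b, A⟩, hστ, hb, hA⟩⟩ := q
    have h1 := rt2_sigma hk σ τ hστ b A hb hA
    have h2 := rt2_tau hk σ τ hστ b A hb hA
    have h3 := rt2_b hk σ τ hστ b A hb hA
    have h4 := rt2_A hk σ τ hστ b A hb hA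
    refine Sigma.ext ?_ ?_
    · show (sigmaOf k π _, tauOf k π _) = (σ, τ)
      rw [h1, h2]
    · apply (Subtype.heq_iff_coe_eq ?_).mpr
      · show (bOf k π _, AOf k _) = (b, A)
        rw [h3, h4]
      · intro x
        dsimp only
        rw [h1, h2]

end Final

theorem stmt18 (n k l : ℕ) (hk : 0 < k) (hl : 0 < l) (π : Equiv.Perm (Fin n)) :
    enrichedCount π (2 * k * l) =
      ∑ p ∈ Finset.univ.filter
          (fun p : Equiv.Perm (Fin n) × Equiv.Perm (Fin n) => p.1 * p.2 = π),
        enrichedCount p.1 k * enrichedCount p.2 l := by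
  haveI instF : ∀ p : Equiv.Perm (Fin n) × Equiv.Perm (Fin n), Finite (Fib k l π p) :=
    fun p => fib_finite k l π p
  haveI instFt : ∀ p : Equiv.Perm (Fin n) × Equiv.Perm (Fin n), Fintype (Fib k l π p) :=
    fun p => Fintype.ofFinite _
  have h0 : enrichedCount π (2 * k * l) =
      Nat.card {a : Fin n → ℤ // Aux18.OKb π (2 * k * l) a} := rfl
  rw [h0, Nat.card_congr (mainEquiv k l hk hl π), Nat.card_eq_fintype_card,
    Fintype.card_sigma]
  rw [← Finset.sum_filter_add_sum_filter_not Finset.univ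
    (fun p : Equiv.Perm (Fin n) × Equiv.Perm (Fin n) => p.1 * p.2 = π)
    (fun p => Fintype.card (Fib k l π p))]
  have hzero : ∑ p ∈ Finset.univ.filter
      (fun p : Equiv.Perm (Fin n) × Equiv.Perm (Fin n) => ¬ p.1 * p.2 = π),
      Fintype.card (Fib k l π p) = 0 := by
    apply Finset.sum_eq_zero
    intro p hp
    rw [Finset.mem_filter] at hp
    haveI : IsEmpty (Fib k l π p) := ⟨fun x => hp.2 x.2.1⟩
    exact Fintype.card_eq_zero
  rw [hzero, add_zero]
  apply Finset.sum_congr rfl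
  intro p hp
  rw [Finset.mem_filter] at hp
  have e2 : Fib k l π p ≃
      ({a : Fin n → ℤ // Aux18.OKb p.1 k a} × {a : Fin n → ℤ // Aux18.OKb p.2 l a}) :=
  { toFun := fun x => (⟨x.1.1, x.2.2.1⟩, ⟨x.1.2, x.2.2.2⟩)
    invFun := fun y => ⟨(y.1.1, y.2.1), hp.2, y.1.2, y.2.2⟩
    left_inv := fun x => rfl
    right_inv := fun y => rfl }
  rw [← Nat.card_eq_fintype_card, Nat.card_congr e2, Nat.card_prod]
  rfl
end
end

section
/- For any permutation π of [n] and positive integers k, l, the left enriched order polynomials satisfy Ω^{(ℓ)}(π; 2kl + k + l) = Σ_{στ = π} Ω^{(ℓ)}(σ; k)·Ω^{(ℓ)}(τ; l). -/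
open scoped Classical

noncomputable section

namespace Stmt19Aux

/- assume w1 w2 content: -/
def zcode (a : ℤ) : ℕ := (el a).toNat
def zdec (c : ℕ) : ℤ := if c % 2 = 0 then ((c/2 : ℕ) : ℤ) else -(((c/2 : ℕ) : ℤ)+1)
lemma el_nonneg (a : ℤ) : 0 ≤ el a := by unfold el; split_ifs <;> omega
lemma zcode_cast (a : ℤ) : (zcode a : ℤ) = el a := Int.toNat_of_nonneg (el_nonneg a)
lemma el_lt_iff {a b : ℤ} : el a < el b ↔ zcode a < zcode b := by
  have h1 := zcode_cast a; have h2 := zcode_cast b; omega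
lemma el_inj {a b : ℤ} (h : el a = el b) : a = b := by
  unfold el at h; split_ifs at h <;> omega
lemma zcode_inj {a b : ℤ} (h : zcode a = zcode b) : a = b := by
  apply el_inj; have h1 := zcode_cast a; have h2 := zcode_cast b; omega
lemma zcode_odd_iff {a : ℤ} : zcode a % 2 = 1 ↔ a < 0 := by
  have h := zcode_cast a; unfold el at h; split_ifs at h <;> omega
lemma zcode_le_iff {a : ℤ} {m : ℕ} : zcode a ≤ 2*m ↔ |a| ≤ (m : ℤ) := by
  have h := zcode_cast a; unfold el at h; rw [abs_le]; split_ifs at h <;> omega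
lemma zcode_zdec (c : ℕ) : zcode (zdec c) = c := by
  have h := zcode_cast (zdec c)
  unfold zdec at h ⊢
  split_ifs at h ⊢ with hc <;> (unfold el at h; split_ifs at h <;> omega)
lemma zdec_zcode (a : ℤ) : zdec (zcode a) = a := by
  apply zcode_inj; rw [zcode_zdec]

variable {n : ℕ}
def key (g : Fin n → ℕ) (x : Fin n) : ℕ ×ₗ ℕ :=
  toLex (g x, if g x % 2 = 0 then n + x.val else n - 1 - x.val)
lemma key_lt_iff {g : Fin n → ℕ} {x y : Fin n} :
    key g x < key g y ↔
      (g x < g y ∨ (g x = g y ∧ (if g x % 2 = 0 then x.val < y.val else y.val < x.val))) := by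
  unfold key
  rw [Prod.Lex.lt_iff]
  have hx := x.isLt; have hy := y.isLt
  simp only [ofLex_toLex]
  split_ifs <;> omega
lemma key_injective (g : Fin n → ℕ) : Function.Injective (key g) := by
  intro x y h
  unfold key at h
  have h2 : (g x, if g x % 2 = 0 then n + x.val else n - 1 - x.val)
      = (g y, if g y % 2 = 0 then n + y.val else n - 1 - y.val) := congrArg ofLex h
  rw [Prod.mk.injEq] at h2
  obtain ⟨h3, h4⟩ := h2
  have hx := x.isLt; have hy := y.isLt
  apply Fin.ext
  split_ifs at h4 <;> omega
lemma strictMono_of_consec {α : Type*} [Preorder α] {f : Fin n → α}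
    (h : ∀ (s : ℕ) (hs : s+1 < n), f ⟨s, Nat.lt_of_succ_lt hs⟩ < f ⟨s+1, hs⟩) :
    StrictMono f := by
  have main : ∀ (j : ℕ) (hj : j < n) (i : ℕ) (hi : i < n), i < j → f ⟨i, hi⟩ < f ⟨j, hj⟩ := by
    intro j
    induction j with
    | zero => intro hj i hi hij; omega
    | succ m ih =>
      intro hj i hi hij
      rcases Nat.lt_or_ge i m with h1 | h2
      · exact lt_trans (ih (by omega) i hi h1) (h m hj)
      · have hieq : i = m := by omega
        subst hieq
        exact h i hj
  intro a b hab
  have := main b.val b.isLt a.val a.isLt hab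
  simpa using this
lemma sort_eq_of_strictMono {f : Fin n → ℕ ×ₗ ℕ} {σ : Equiv.Perm (Fin n)}
    (h : StrictMono (fun i => f (σ i))) : Tuple.sort f = σ := by
  symm
  rw [Tuple.eq_sort_iff]
  exact ⟨h.monotone, fun i j hij hf => absurd hf (ne_of_lt (h hij))⟩
lemma strictMono_sort (f : Fin n → ℕ ×ₗ ℕ) (hinj : Function.Injective f) :
    StrictMono (fun i => f (Tuple.sort f i)) := by
  have h1 : Monotone (f ∘ Tuple.sort f) := Tuple.monotone_sort f
  exact h1.strictMono_of_injective (hinj.comp (Tuple.sort f).injective)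
/- end w1 w2 -/

/-- step condition -/
lemma key_step {g : Fin n → ℕ} {x y : Fin n} (hne : x ≠ y) :
    (g x < g y ∨ (g x = g y ∧ (g x % 2 = 1 ↔ y < x))) ↔ key g x < key g y := by
  rw [key_lt_iff]
  have hne' : x.val ≠ y.val := fun h => hne (Fin.ext h)
  simp only [Fin.lt_def]
  split_ifs with h <;> omega

def Adm (π : Equiv.Perm (Fin n)) (g : Fin n → ℕ) : Prop :=
  ∀ (s : ℕ) (hs : s + 1 < n),
    g (π ⟨s, Nat.lt_of_succ_lt hs⟩) < g (π ⟨s+1, hs⟩) ∨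
      (g (π ⟨s, Nat.lt_of_succ_lt hs⟩) = g (π ⟨s+1, hs⟩) ∧
        (g (π ⟨s, Nat.lt_of_succ_lt hs⟩) % 2 = 1 ↔ π ⟨s+1, hs⟩ < π ⟨s, Nat.lt_of_succ_lt hs⟩))

lemma adm_iff_sort {π : Equiv.Perm (Fin n)} {g : Fin n → ℕ} :
    Adm π g ↔ Tuple.sort (key g) = π := by
  constructor
  · intro h
    apply sort_eq_of_strictMono
    apply strictMono_of_consec
    intro s hs
    have hne : π ⟨s, Nat.lt_of_succ_lt hs⟩ ≠ π ⟨s+1, hs⟩ := by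
      intro he
      have := π.injective he
      simp only [Fin.mk.injEq] at this
      omega
    exact (key_step hne).mp (h s hs)
  · intro h s hs
    have hsm : StrictMono (fun i => key g (π i)) := by
      rw [← h]; exact strictMono_sort (key g) (key_injective g)
    have hne : π ⟨s, Nat.lt_of_succ_lt hs⟩ ≠ π ⟨s+1, hs⟩ := by
      intro he
      have := π.injective he
      simp only [Fin.mk.injEq] at this
      omega
    refine (key_step hne).mpr ?_
    exact hsm (show (⟨s, Nat.lt_of_succ_lt hs⟩ : Fin n) < ⟨s+1, hs⟩ by simp [Fin.lt_def])

/-- counting lemma -/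
lemma count_eq (π : Equiv.Perm (Fin n)) (m : ℕ) :
    leftEnrichedCount π m
      = Fintype.card {g : Fin n → Fin (2*m+1) // Adm π (fun x => (g x : ℕ))} := by
  rw [← Nat.card_eq_fintype_card]
  apply Nat.card_congr
  refine
    { toFun := fun a => ⟨fun x => ⟨zcode (a.1 (π⁻¹ x)), by
        have := zcode_le_iff.mpr (a.2.1 (π⁻¹ x)); omega⟩, ?_⟩
      invFun := fun g => ⟨fun s => zdec ((g.1 (π s) : ℕ)), ?_, ?_⟩
      left_inv := ?_
      right_inv := ?_ }
  · -- Adm proof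
    intro s hs
    have t := a.2.2 s hs
    simp only [Equiv.Perm.coe_inv, Equiv.symm_apply_apply]
    by_cases hd : π ⟨s+1, hs⟩ < π ⟨s, Nat.lt_of_succ_lt hs⟩
    · rw [if_pos hd] at t
      rcases t with t | ⟨t1, t2⟩
      · exact Or.inl (el_lt_iff.mp t)
      · refine Or.inr ⟨congrArg zcode t1, ?_⟩
        rw [zcode_odd_iff]
        constructor
        · intro _; exact hd
        · intro _; rw [t1]; exact t2
    · rw [if_neg hd] at t
      rcases t with t | ⟨t1, t2⟩
      · exact Or.inl (el_lt_iff.mp t)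
      · refine Or.inr ⟨congrArg zcode t1, ?_⟩
        rw [zcode_odd_iff]
        constructor
        · intro hlt; exact absurd (t1 ▸ hlt) (not_lt.mpr t2)
        · intro h; exact absurd h hd
  · -- bound
    intro s
    rw [zcode_le_iff.symm, zcode_zdec]
    have := (g.1 (π s)).isLt; omega
  · -- condition
    intro s hs
    have t := g.2 s hs
    simp only at t
    by_cases hd : π ⟨s+1, hs⟩ < π ⟨s, Nat.lt_of_succ_lt hs⟩
    · rw [if_pos hd]
      rcases t with t | ⟨t1, t2⟩
      · exact Or.inl (el_lt_iff.mpr (by rw [zcode_zdec, zcode_zdec]; exact t))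
      · refine Or.inr ⟨congrArg zdec t1, ?_⟩
        rw [← zcode_odd_iff, zcode_zdec]
        exact (t1 ▸ (t2.mpr hd))
    · rw [if_neg hd]
      rcases t with t | ⟨t1, t2⟩
      · exact Or.inl (el_lt_iff.mpr (by rw [zcode_zdec, zcode_zdec]; exact t))
      · refine Or.inr ⟨congrArg zdec t1, ?_⟩
        show (0:ℤ) ≤ zdec ((g.1 (π ⟨s+1, hs⟩) : ℕ))
        have : ¬ ((g.1 (π ⟨s+1, hs⟩) : ℕ) % 2 = 1) := by
          intro hx
          have := t2.mp (by rw [t1]; exact hx)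
          exact hd this
        have h0 : ¬ (zcode (zdec ((g.1 (π ⟨s+1, hs⟩) : ℕ))) % 2 = 1) := by
          rw [zcode_zdec]; exact this
        rw [zcode_odd_iff] at h0
        omega
  · intro a
    apply Subtype.ext
    funext s
    simp only [Equiv.Perm.coe_inv, Equiv.symm_apply_apply, zdec_zcode]
  · intro g
    apply Subtype.ext
    funext x
    apply Fin.ext
    simp only [Equiv.Perm.coe_inv, Equiv.apply_symm_apply, zcode_zdec]

def twist (K m t : ℕ) : ℕ := if m % 2 = 0 then t else K - t

lemma twist_le {K m t : ℕ} (h : t ≤ K) : twist K m t ≤ K := by unfold twist; split <;> omega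

lemma twist_twist {K m t : ℕ} (h : t ≤ K) : twist K m (twist K m t) = t := by
  unfold twist; split <;> omega

def sortg {N : ℕ} (g : Fin n → Fin N) : Equiv.Perm (Fin n) :=
  Tuple.sort (key (fun x => (g x : ℕ)))

lemma parity_helper (A t k : ℕ) : (A*(2*k+1) + t) % 2 = (A + t) % 2 := by
  have e : A*(2*k+1)+t = 2*(A*k) + (A + t) := by ring
  rw [e]; omega

lemma arith1 {A B t1 t2 M : ℕ} (h : A < B) (ht : t1 < M) : A*M + t1 < B*M + t2 := by
  calc A*M+t1 < A*M + M := by omega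
    _ = (A+1)*M := by ring
    _ ≤ B*M := Nat.mul_le_mul_right M h
    _ ≤ B*M + t2 := Nat.le_add_right _ _

def comb (k l : ℕ) (g : Fin n → Fin (2*k+1)) (h : Fin n → Fin (2*l+1)) :
    Fin n → Fin ((2*k+1)*(2*l+1)) :=
  fun x => ⟨(h ((sortg g)⁻¹ x) : ℕ) * (2*k+1)
      + twist (2*k) ((h ((sortg g)⁻¹ x) : ℕ)) ((g x : ℕ)), by
    have h1 : ((h ((sortg g)⁻¹ x)) : ℕ) ≤ 2*l := by
      have := (h ((sortg g)⁻¹ x)).isLt; omega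
    have h2 : (g x : ℕ) ≤ 2*k := by have := (g x).isLt; omega
    have h3 := twist_le (K := 2*k) (m := ((h ((sortg g)⁻¹ x)) : ℕ)) h2
    calc ((h ((sortg g)⁻¹ x)) : ℕ) * (2*k+1) + twist (2*k) _ ((g x : ℕ))
        < ((h ((sortg g)⁻¹ x)) : ℕ) * (2*k+1) + (2*k+1) := by omega
      _ = (((h ((sortg g)⁻¹ x)) : ℕ) + 1) * (2*k+1) := by ring
      _ ≤ (2*l+1) * (2*k+1) := Nat.mul_le_mul_right _ (by omega)
      _ = (2*k+1)*(2*l+1) := by ring⟩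

lemma sort_comb (k l : ℕ) (g : Fin n → Fin (2*k+1)) (h : Fin n → Fin (2*l+1)) :
    Tuple.sort (key (fun x => ((comb k l g h x : ℕ)))) = sortg g * sortg h := by
  apply sort_eq_of_strictMono
  intro i j hij
  have Hh : StrictMono (fun i => key (fun x => ((h x : ℕ))) (sortg h i)) :=
    strictMono_sort _ (key_injective _)
  have Hg : StrictMono (fun i => key (fun x => ((g x : ℕ))) (sortg g i)) :=
    strictMono_sort _ (key_injective _)
  have hkey := Hh hij
  have hmul : ∀ i, ((sortg g * sortg h) i) = sortg g (sortg h i) := fun _ => rfl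
  simp only [hmul]
  have hcval : ∀ z : Fin n, (comb k l g h (sortg g z) : ℕ)
      = (h z : ℕ) * (2*k+1) + twist (2*k) ((h z : ℕ)) ((g (sortg g z) : ℕ)) := by
    intro z
    simp only [comb, Equiv.Perm.coe_inv, Equiv.symm_apply_apply]
  rw [key_lt_iff] at hkey ⊢
  simp only [hcval]
  have hgx := (g (sortg g (sortg h i))).isLt
  have hgy := (g (sortg g (sortg h j))).isLt
  rcases hkey with hlt | ⟨heq, htie⟩
  · left
    apply arith1 hlt
    have := twist_le (K := 2*k) (m := ((h (sortg h i) : ℕ)))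
      (t := (g (sortg g (sortg h i)) : ℕ)) (by omega)
    omega
  · by_cases hp : (h (sortg h i) : ℕ) % 2 = 0
    · -- even: sortg h i < sortg h j
      rw [if_pos hp] at htie
      have hxy : sortg h i < sortg h j := by rw [Fin.lt_def]; exact htie
      have hgkey := Hg hxy
      rw [key_lt_iff] at hgkey
      rcases hgkey with hg1 | ⟨hg2, hg3⟩
      · left
        rw [heq]
        apply Nat.add_lt_add_left
        unfold twist
        rw [← heq, if_pos hp, if_pos hp]
        exact hg1
      · right
        refine ⟨by rw [heq, hg2], ?_⟩
        have hpar : ((h (sortg h i) : ℕ) * (2*k+1)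
            + twist (2*k) ((h (sortg h i) : ℕ)) ((g (sortg g (sortg h i)) : ℕ))) % 2
              = ((g (sortg g (sortg h i)) : ℕ)) % 2 := by
          rw [parity_helper]
          unfold twist
          rw [if_pos hp]
          omega
        split_ifs with hc
        · rw [hpar] at hc
          rw [if_pos hc] at hg3
          exact hg3
        · rw [hpar] at hc
          rw [if_neg hc] at hg3
          exact hg3
    · -- odd: sortg h j < sortg h i
      rw [if_neg hp] at htie
      have hyx : sortg h j < sortg h i := by rw [Fin.lt_def]; exact htie
      have hgkey := Hg hyx
      rw [key_lt_iff] at hgkey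
      rcases hgkey with hg1 | ⟨hg2, hg3⟩
      · left
        rw [heq]
        apply Nat.add_lt_add_left
        unfold twist
        rw [← heq, if_neg hp, if_neg hp]
        omega
      · right
        refine ⟨by rw [heq, hg2.symm], ?_⟩
        have hpar : ((h (sortg h i) : ℕ) * (2*k+1)
            + twist (2*k) ((h (sortg h i) : ℕ)) ((g (sortg g (sortg h i)) : ℕ))) % 2
              = ((g (sortg g (sortg h i)) : ℕ) + 1) % 2 := by
          rw [parity_helper]
          unfold twist
          rw [if_neg hp]
          omega
        split_ifs with hc
        · rw [hpar] at hc
          have hgodd : ¬ ((g (sortg g (sortg h j)) : ℕ) % 2 = 0) := by rw [hg2]; omega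
          rw [if_neg hgodd] at hg3
          exact hg3
        · rw [hpar] at hc
          have hgev : ((g (sortg g (sortg h j)) : ℕ) % 2 = 0) := by rw [hg2]; omega
          rw [if_pos hgev] at hg3
          exact hg3

def gdec (k l : ℕ) (f : Fin n → Fin ((2*k+1)*(2*l+1))) : Fin n → Fin (2*k+1) :=
  fun x => ⟨twist (2*k) ((f x : ℕ)/(2*k+1)) ((f x : ℕ) % (2*k+1)), by
    have h1 : (f x : ℕ) % (2*k+1) < 2*k+1 := Nat.mod_lt _ (by omega)
    unfold twist; split <;> omega⟩

def hdec (k l : ℕ) (f : Fin n → Fin ((2*k+1)*(2*l+1))) : Fin n → Fin (2*l+1) :=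
  fun x => ⟨(f (sortg (gdec k l f) x) : ℕ)/(2*k+1), by
    have h1 : (f (sortg (gdec k l f) x) : ℕ) < (2*k+1)*(2*l+1) := (f _).isLt
    rw [Nat.div_lt_iff_lt_mul (by omega)]
    exact lt_of_lt_of_le h1 (le_of_eq (Nat.mul_comm _ _))⟩

lemma gdec_comb (k l : ℕ) (g : Fin n → Fin (2*k+1)) (h : Fin n → Fin (2*l+1)) :
    gdec k l (comb k l g h) = g := by
  funext x
  apply Fin.ext
  have hgle : (g x : ℕ) ≤ 2*k := by have := (g x).isLt; omega
  have htle := twist_le (K := 2*k) (m := ((h ((sortg g)⁻¹ x) : ℕ))) hgle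
  have hval : (comb k l g h x : ℕ)
      = (h ((sortg g)⁻¹ x) : ℕ) * (2*k+1)
        + twist (2*k) ((h ((sortg g)⁻¹ x) : ℕ)) ((g x : ℕ)) := rfl
  have hdiv : (comb k l g h x : ℕ) / (2*k+1) = (h ((sortg g)⁻¹ x) : ℕ) := by
    rw [hval, Nat.mul_comm, Nat.mul_add_div (by omega), Nat.div_eq_of_lt (by omega)]
    omega
  have hmod : (comb k l g h x : ℕ) % (2*k+1)
      = twist (2*k) ((h ((sortg g)⁻¹ x) : ℕ)) ((g x : ℕ)) := by
    rw [hval, Nat.mul_comm, Nat.mul_add_mod, Nat.mod_eq_of_lt (by omega)]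
  show twist (2*k) ((comb k l g h x : ℕ)/(2*k+1)) ((comb k l g h x : ℕ) % (2*k+1)) = (g x : ℕ)
  rw [hdiv, hmod, twist_twist hgle]

lemma hdec_comb (k l : ℕ) (g : Fin n → Fin (2*k+1)) (h : Fin n → Fin (2*l+1)) :
    hdec k l (comb k l g h) = h := by
  funext x
  apply Fin.ext
  have hg : gdec k l (comb k l g h) = g := gdec_comb k l g h
  show (comb k l g h (sortg (gdec k l (comb k l g h)) x) : ℕ)/(2*k+1) = (h x : ℕ)
  rw [hg]
  have hval : (comb k l g h (sortg g x) : ℕ)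
      = (h x : ℕ) * (2*k+1)
        + twist (2*k) ((h x : ℕ)) ((g (sortg g x) : ℕ)) := by
    simp only [comb, Equiv.Perm.coe_inv, Equiv.symm_apply_apply]
  have hgle : (g (sortg g x) : ℕ) ≤ 2*k := by have := (g (sortg g x)).isLt; omega
  have htle := twist_le (K := 2*k) (m := ((h x : ℕ))) hgle
  rw [hval, Nat.mul_comm, Nat.mul_add_div (by omega), Nat.div_eq_of_lt (by omega)]
  omega

def combEquiv (k l : ℕ) :
    ((Fin n → Fin (2*k+1)) × (Fin n → Fin (2*l+1))) ≃ (Fin n → Fin ((2*k+1)*(2*l+1))) where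
  toFun p := comb k l p.1 p.2
  invFun f := (gdec k l f, hdec k l f)
  left_inv p := by
    obtain ⟨g, h⟩ := p
    simp only [gdec_comb, hdec_comb]
  right_inv f := by
    funext x
    apply Fin.ext
    have hfin : (f x : ℕ) % (2*k+1) < 2*k+1 := Nat.mod_lt _ (by omega)
    have hgd : (gdec k l f x : ℕ)
        = twist (2*k) ((f x : ℕ)/(2*k+1)) ((f x : ℕ) % (2*k+1)) := rfl
    have hval : (comb k l (gdec k l f) (hdec k l f) x : ℕ)
        = (hdec k l f ((sortg (gdec k l f))⁻¹ x) : ℕ) * (2*k+1)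
          + twist (2*k) ((hdec k l f ((sortg (gdec k l f))⁻¹ x) : ℕ)) ((gdec k l f x : ℕ)) := rfl
    have hh : (hdec k l f ((sortg (gdec k l f))⁻¹ x) : ℕ) = (f x : ℕ)/(2*k+1) := by
      show (f (sortg (gdec k l f) ((sortg (gdec k l f))⁻¹ x)) : ℕ)/(2*k+1) = (f x : ℕ)/(2*k+1)
      rw [Equiv.Perm.coe_inv, Equiv.apply_symm_apply]
    rw [hval, hh, hgd, twist_twist (by omega)]
    rw [Nat.mul_comm]
    exact Nat.div_add_mod _ _

end Stmt19Aux

namespace Stmt19Aux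

lemma count_sort {n : ℕ} (ρ : Equiv.Perm (Fin n)) (m : ℕ) :
    leftEnrichedCount ρ m = Fintype.card {g : Fin n → Fin (2*m+1) // sortg g = ρ} := by
  rw [count_eq]
  exact Fintype.card_congr (Equiv.subtypeEquivRight (fun g => adm_iff_sort))

lemma card_sort_congr {n : ℕ} {N N' : ℕ} (h : N = N') (ρ : Equiv.Perm (Fin n)) :
    Fintype.card {g : Fin n → Fin N // sortg g = ρ}
      = Fintype.card {g : Fin n → Fin N' // sortg g = ρ} := by
  subst h; rfl

lemma sortg_comb {n : ℕ} (k l : ℕ) (g : Fin n → Fin (2*k+1)) (h : Fin n → Fin (2*l+1)) :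
    sortg (comb k l g h) = sortg g * sortg h := sort_comb k l g h

end Stmt19Aux

open Stmt19Aux in
theorem stmt19 (n k l : ℕ) (hk : 0 < k) (hl : 0 < l) (π : Equiv.Perm (Fin n)) :
    leftEnrichedCount π (2 * k * l + k + l) =
      ∑ p ∈ Finset.univ.filter
          (fun p : Equiv.Perm (Fin n) × Equiv.Perm (Fin n) => p.1 * p.2 = π),
        leftEnrichedCount p.1 k * leftEnrichedCount p.2 l := by
  rw [count_sort π (2*k*l+k+l),
    card_sort_congr (show 2*(2*k*l+k+l)+1 = (2*k+1)*(2*l+1) by ring) π]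
  have e1 : {f : Fin n → Fin ((2*k+1)*(2*l+1)) // sortg f = π}
      ≃ {p : (Fin n → Fin (2*k+1)) × (Fin n → Fin (2*l+1)) // sortg p.1 * sortg p.2 = π} :=
    ((combEquiv k l).subtypeEquiv (fun p => by
      rw [show sortg ((combEquiv k l) p) = sortg p.1 * sortg p.2 from sortg_comb k l p.1 p.2])).symm
  rw [Fintype.card_congr e1, Fintype.card_subtype]
  rw [Finset.card_eq_sum_card_fiberwise (f := fun p => (sortg p.1, sortg p.2))
      (t := Finset.univ.filter
        (fun q : Equiv.Perm (Fin n) × Equiv.Perm (Fin n) => q.1 * q.2 = π))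
      (fun p hp => by
        simp only [Finset.coe_filter, Finset.mem_coe, Finset.mem_filter, Finset.mem_univ, true_and, Set.mem_setOf_eq] at hp ⊢
        exact hp)]
  apply Finset.sum_congr rfl
  intro q hq
  simp only [Finset.mem_filter, Finset.mem_univ, true_and] at hq
  have hset : ((Finset.univ.filter
        (fun p : (Fin n → Fin (2*k+1)) × (Fin n → Fin (2*l+1)) =>
          sortg p.1 * sortg p.2 = π)).filter
        (fun p => (sortg p.1, sortg p.2) = q))
      = (Finset.univ.filter (fun g : Fin n → Fin (2*k+1) => sortg g = q.1))
          ×ˢ (Finset.univ.filter (fun h : Fin n → Fin (2*l+1) => sortg h = q.2)) := by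
    ext p
    simp only [Finset.mem_filter, Finset.mem_univ, true_and, Finset.mem_product,
      Prod.ext_iff]
    constructor
    · rintro ⟨h1, h2, h3⟩; exact ⟨h2, h3⟩
    · rintro ⟨h2, h3⟩; exact ⟨by rw [h2, h3, hq], h2, h3⟩
  rw [hset, Finset.card_product]
  have c1 : (Finset.univ.filter (fun g : Fin n → Fin (2*k+1) => sortg g = q.1)).card
      = leftEnrichedCount q.1 k := by
    rw [count_sort q.1 k, Fintype.card_subtype]
  have c2 : (Finset.univ.filter (fun h : Fin n → Fin (2*l+1) => sortg h = q.2)).card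
      = leftEnrichedCount q.2 l := by
    rw [count_sort q.2 l, Fintype.card_subtype]
  rw [c1, c2]
end
end
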